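/- If B is a C*-subalgebra of l∞(X) that contains C(X) and satisfies f ∈ B ⟹ α(f) ∈ B and L(f) ∈ B, then D_X ⊆ B. -/
import Mathlib


open scoped ENNReal
open Classical
set_option linter.unusedSectionVars false
set_option synthInstance.maxHeartbeats 1000000
set_option maxHeartbeats 1000000

noncomputable section

variable {𝔞 : Type*} [Fintype 𝔞] [Nonempty 𝔞] [TopologicalSpace 𝔞] [DiscreteTopology 𝔞]

/-- The one-sided shift map on the full one-sided shift `𝔞^ℕ`. -/
def shift (x : ℕ → 𝔞) : ℕ → 𝔞 := fun n => x (n + 1)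

/-- Concatenation `u x` of a finite word `u` with an infinite sequence `x`. -/
def wcat (u : List 𝔞) (x : ℕ → 𝔞) : ℕ → 𝔞 := fun n =>
  if h : n < u.length then u.get ⟨n, h⟩ else x (n - u.length)

/-- `l∞(X)`: the C*-algebra of bounded complex-valued functions on `X`,
with pointwise operations and the supremum norm. -/
abbrev Linf (X : Set (ℕ → 𝔞)) : Type _ := lp (fun _ : X => ℂ) ∞

/-- The set `C(u,v) = {vx : x ∈ X, vx ∈ X, ux ∈ X}`. -/
def cyl (X : Set (ℕ → 𝔞)) (u v : List 𝔞) : Set (ℕ → 𝔞) :=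
  {y | ∃ x, x ∈ X ∧ wcat u x ∈ X ∧ wcat v x ∈ X ∧ y = wcat v x}

/-- The indicator function of a subset `S`, as an element of `l∞(X)`. -/
def chi (X S : Set (ℕ → 𝔞)) : Linf X :=
  ⟨fun x => S.indicator (fun _ => (1 : ℂ)) (x : ℕ → 𝔞),
    memℓp_infty ⟨1, by
      rintro r ⟨x, rfl⟩
      by_cases h : (x : ℕ → 𝔞) ∈ S <;> simp [Set.indicator_apply, h]⟩⟩

/-- `D_X`: the smallest C*-subalgebra (norm-closed, star-closed subalgebra) of `l∞(X)`
containing the indicator functions `χ_{C(u,v)}` for all words `u, v`. -/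
def Dalg (X : Set (ℕ → 𝔞)) : NonUnitalStarSubalgebra ℂ (Linf X) :=
  (NonUnitalStarAlgebra.adjoin ℂ
    {f : Linf X | ∃ u v : List 𝔞, f = chi X (cyl X u v)}).topologicalClosure

lemma chi_cyl_mem_Dalg (X : Set (ℕ → 𝔞)) (u v : List 𝔞) : chi X (cyl X u v) ∈ Dalg X :=
  (NonUnitalStarAlgebra.adjoin ℂ _).le_topologicalClosure
    (NonUnitalStarAlgebra.subset_adjoin ℂ _ ⟨u, v, rfl⟩)

/-- The map `α : l∞(X) → l∞(X)`, `α(f)(x) = f(σ x)`. -/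
def alphaMap (X : Set (ℕ → 𝔞)) (hX : ∀ x ∈ X, shift x ∈ X) (f : Linf X) : Linf X :=
  ⟨fun x => f ⟨shift (x : ℕ → 𝔞), hX _ x.2⟩,
    memℓp_infty ⟨‖f‖, by
      rintro r ⟨x, rfl⟩
      exact lp.norm_apply_le_norm ENNReal.top_ne_zero f _⟩⟩

/-- The set `σ⁻¹({x})` of preimages of `x` in `X` under the shift. -/
def preims (X : Set (ℕ → 𝔞)) (x : ℕ → 𝔞) : Set X :=
  {y : X | shift (y : ℕ → 𝔞) = x}

lemma preims_finite (X : Set (ℕ → 𝔞)) (x : ℕ → 𝔞) : (preims X x).Finite := by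
  apply Set.Finite.of_finite_image (f := fun y : X => (y : ℕ → 𝔞) 0) (Set.toFinite _)
  intro y hy z hz h
  apply Subtype.ext
  funext n
  cases n with
  | zero => exact h
  | succ m =>
    have hy' : shift (y : ℕ → 𝔞) = x := hy
    have hz' : shift (z : ℕ → 𝔞) = x := hz
    exact congrFun (hy'.trans hz'.symm) m

lemma aux_norm_le (X : Set (ℕ → 𝔞)) (f : Linf X) (S : Set X) (hS : S.Finite) :
    ‖((S.ncard : ℂ))⁻¹ * ∑ᶠ y ∈ S, f y‖ ≤ ‖f‖ := by
  rw [finsum_mem_eq_finite_toFinset_sum _ hS]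
  have hcard : S.ncard = hS.toFinset.card := Set.ncard_eq_toFinset_card _ hS
  rcases Nat.eq_zero_or_pos hS.toFinset.card with h0 | hpos
  · have he : hS.toFinset = ∅ := Finset.card_eq_zero.mp h0
    rw [he]
    simp only [Finset.sum_empty, mul_zero, norm_zero]
    exact norm_nonneg f
  · have hb : ‖∑ y ∈ hS.toFinset, (f : ∀ _ : X, ℂ) y‖ ≤ (hS.toFinset.card : ℝ) * ‖f‖ := by
      calc ‖∑ y ∈ hS.toFinset, (f : ∀ _ : X, ℂ) y‖ ≤ ∑ y ∈ hS.toFinset, ‖(f : ∀ _ : X, ℂ) y‖ :=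
            norm_sum_le _ _
      _ ≤ hS.toFinset.card • ‖f‖ := Finset.sum_le_card_nsmul _ _ _
            (fun y _ => lp.norm_apply_le_norm ENNReal.top_ne_zero f y)
      _ = (hS.toFinset.card : ℝ) * ‖f‖ := nsmul_eq_mul _ _
    have hno : ‖((S.ncard : ℂ))⁻¹‖ = ((hS.toFinset.card : ℝ))⁻¹ := by
      rw [norm_inv, hcard]
      norm_num
    calc ‖((S.ncard : ℂ))⁻¹ * ∑ y ∈ hS.toFinset, (f : ∀ _ : X, ℂ) y‖
        = ((hS.toFinset.card : ℝ))⁻¹ * ‖∑ y ∈ hS.toFinset, (f : ∀ _ : X, ℂ) y‖ := by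
          rw [norm_mul, hno]
    _ ≤ ((hS.toFinset.card : ℝ))⁻¹ * ((hS.toFinset.card : ℝ) * ‖f‖) := by
          apply mul_le_mul_of_nonneg_left hb
          positivity
    _ = ‖f‖ := by
          rw [← mul_assoc, inv_mul_cancel₀ (by positivity), one_mul]

/-- The transfer operator `L : l∞(X) → l∞(X)`:
`L(f)(x)` is the average of `f` over `σ⁻¹({x})` if `x ∈ σ(X)`, and `0` otherwise. -/
def Lmap (X : Set (ℕ → 𝔞)) (f : Linf X) : Linf X :=
  ⟨fun x => if (x : ℕ → 𝔞) ∈ shift '' X then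
      (((preims X (x : ℕ → 𝔞)).ncard : ℂ))⁻¹ * ∑ᶠ y ∈ preims X (x : ℕ → 𝔞), f y
    else 0,
    memℓp_infty ⟨‖f‖, by
      rintro r ⟨x, rfl⟩
      dsimp only
      split_ifs with h
      · exact aux_norm_le X f _ (preims_finite X _)
      · rw [norm_zero]; exact norm_nonneg f⟩⟩


/-! ### Auxiliary lemmas -/

lemma wcat_nil' (x : ℕ → 𝔞) : wcat ([] : List 𝔞) x = x := by
  funext n; simp [wcat]

lemma wcat_add_length (u : List 𝔞) (x : ℕ → 𝔞) (n : ℕ) :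
    wcat u x (n + u.length) = x n := by
  simp [wcat]

lemma shift_iter_apply (k : ℕ) (x : ℕ → 𝔞) (n : ℕ) : (shift^[k] x) n = x (n + k) := by
  induction k generalizing x with
  | zero => rfl
  | succ k ih =>
    rw [Function.iterate_succ_apply, ih]
    show x (n + k + 1) = x (n + (k + 1))
    ring_nf

lemma shift_iter_wcat (u : List 𝔞) (x : ℕ → 𝔞) : shift^[u.length] (wcat u x) = x := by
  funext n; rw [shift_iter_apply, wcat_add_length]

lemma shiftMemIter (X : Set (ℕ → 𝔞)) (hXinv : ∀ x ∈ X, shift x ∈ X) (k : ℕ) :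
    ∀ x ∈ X, shift^[k] x ∈ X := by
  induction k with
  | zero => exact fun x hx => hx
  | succ k ih =>
    intro x hx
    rw [Function.iterate_succ_apply]
    exact ih _ (hXinv x hx)

lemma mem_of_wcat_mem (X : Set (ℕ → 𝔞)) (hXinv : ∀ x ∈ X, shift x ∈ X)
    (u : List 𝔞) (x : ℕ → 𝔞) (h : wcat u x ∈ X) : x ∈ X := by
  have := shiftMemIter X hXinv u.length _ h
  rwa [shift_iter_wcat] at this

lemma wcat_append' (u v : List 𝔞) (x : ℕ → 𝔞) :
    wcat (u ++ v) x = wcat u (wcat v x) := by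
  funext n
  simp only [wcat, List.length_append]
  by_cases h1 : n < u.length
  · rw [dif_pos (by omega), dif_pos h1]
    simp only [List.get_eq_getElem]
    exact List.getElem_append_left h1
  · rw [dif_neg h1]
    by_cases h2 : n < u.length + v.length
    · rw [dif_pos h2, dif_pos (show n - u.length < v.length by omega)]
      simp only [List.get_eq_getElem]
      exact List.getElem_append_right (by omega)
    · rw [dif_neg h2, dif_neg (by omega)]
      congr 1; omega

lemma wcat_head (y : ℕ → 𝔞) : wcat [y 0] (shift y) = y := by
  funext n
  cases n with
  | zero => simp [wcat]
  | succ m => simp [wcat, shift]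

lemma wcat_of_prefix (v : List 𝔞) (x : ℕ → 𝔞)
    (h : ∀ i (hi : i < v.length), x i = v.get ⟨i, hi⟩) :
    wcat v (shift^[v.length] x) = x := by
  funext n
  by_cases hn : n < v.length
  · simp only [wcat]; rw [dif_pos hn]; exact (h n hn).symm
  · simp only [wcat]; rw [dif_neg hn, shift_iter_apply]; congr 1; omega

lemma chi_apply (X S : Set (ℕ → 𝔞)) (x : X) :
    chi X S x = S.indicator (fun _ => (1 : ℂ)) (x : ℕ → 𝔞) := rfl

lemma chi_continuous (X S : Set (ℕ → 𝔞)) (k : ℕ)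
    (hS : ∀ x y : ℕ → 𝔞, (∀ i < k, x i = y i) → (x ∈ S ↔ y ∈ S)) :
    Continuous fun x : X => (chi X S) x := by
  classical
  set c : 𝔞 := Classical.arbitrary 𝔞 with hc
  set ext : (Fin k → 𝔞) → (ℕ → 𝔞) := fun p n => if h : n < k then p ⟨n, h⟩ else c with hext
  set g : (Fin k → 𝔞) → ℂ := fun p => S.indicator (fun _ => 1) (ext p) with hg
  set π : X → (Fin k → 𝔞) := fun x i => (x : ℕ → 𝔞) i with hπdef
  have hπ : Continuous π := by
    apply continuous_pi
    intro i
    exact (continuous_apply (i : ℕ)).comp continuous_subtype_val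
  have key : (fun x : X => (chi X S) x) = g ∘ π := by
    funext x
    show S.indicator (fun _ => 1) (x : ℕ → 𝔞) = S.indicator (fun _ => 1) (ext (π x))
    have hmem : (x : ℕ → 𝔞) ∈ S ↔ ext (π x) ∈ S := by
      apply hS
      intro i hi
      simp only [hext, hπdef, dif_pos hi]
    by_cases hx : (x : ℕ → 𝔞) ∈ S
    · rw [Set.indicator_of_mem hx, Set.indicator_of_mem (hmem.mp hx)]
    · rw [Set.indicator_of_notMem hx, Set.indicator_of_notMem (fun hh => hx (hmem.mpr hh))]
  rw [key]
  exact (continuous_of_discreteTopology).comp hπ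

/-- Evaluation at a point, as a ring homomorphism on `l∞(X)`. -/
def evalHom (X : Set (ℕ → 𝔞)) (x : X) : Linf X →+* ℂ where
  toFun f := f x
  map_one' := rfl
  map_mul' _ _ := rfl
  map_zero' := rfl
  map_add' f g := congrFun (lp.coeFn_add f g) x

lemma alphaMap_iter_apply (X : Set (ℕ → 𝔞)) (hXinv : ∀ x ∈ X, shift x ∈ X)
    (k : ℕ) (f : Linf X) (x : X) :
    ((alphaMap X hXinv)^[k] f) x
      = f ⟨shift^[k] (x : ℕ → 𝔞), shiftMemIter X hXinv k _ x.2⟩ := by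
  induction k generalizing f with
  | zero => rfl
  | succ k ih =>
    rw [Function.iterate_succ_apply, ih (alphaMap X hXinv f) ]
    have hs : shift (shift^[k] (x : ℕ → 𝔞)) = shift^[k+1] (x : ℕ → 𝔞) :=
      (Function.iterate_succ_apply' shift k (x : ℕ → 𝔞)).symm
    have h2 : (⟨shift (shift^[k] (x : ℕ → 𝔞)), hXinv _ (shiftMemIter X hXinv k _ x.2)⟩ : X)
        = ⟨shift^[k+1] (x : ℕ → 𝔞), shiftMemIter X hXinv (k+1) _ x.2⟩ := Subtype.ext hs
    show f ⟨shift (shift^[k] (x : ℕ → 𝔞)), _⟩ = _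
    rw [h2]

lemma sub_smul_apply (X : Set (ℕ → 𝔞)) (h : Linf X) (c : ℂ) (x : X) :
    ((1 : Linf X) - c • h) x = 1 - c * h x := by
  have h1 := congrFun (lp.coeFn_sub (1 : Linf X) (c • h)) x
  have h2 := congrFun (lp.coeFn_smul c h) x
  simp only [Pi.sub_apply, Pi.smul_apply, smul_eq_mul] at h1 h2
  rw [h1, h2]
  rfl

/-- The polynomial renormalization trick: if `h ∈ B` takes only values `0` and `1/k`
(`1 ≤ k ≤ m`), and `g` is the indicator of the support of `h`, then `g ∈ B`. -/
lemma indicator_mem_of_scaled (X : Set (ℕ → 𝔞)) (B : NonUnitalStarSubalgebra ℂ (Linf X))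
    (hone : (1 : Linf X) ∈ B) (m : ℕ) (h g : Linf X) (hh : h ∈ B)
    (hval : ∀ x : X, (g x = 0 ∧ h x = 0) ∨
      (g x = 1 ∧ ∃ k : ℕ, 1 ≤ k ∧ k ≤ m ∧ h x = ((k : ℂ))⁻¹)) :
    g ∈ B := by
  have hfac : ∀ k : ℕ, ((1 : Linf X) - ((k : ℂ)) • h) ∈ B :=
    fun k => B.sub_mem hone (B.smul_mem _ hh)
  have hQmem : ∀ n : ℕ,
      (∏ k ∈ Finset.range n, ((1 : Linf X) - (((k + 1 : ℕ) : ℂ)) • h)) ∈ B := by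
    intro n
    induction n with
    | zero => simpa using hone
    | succ n ih =>
      rw [Finset.prod_range_succ]
      exact B.mul_mem ih (hfac _)
  set Q : Linf X := ∏ k ∈ Finset.range m, ((1 : Linf X) - (((k + 1 : ℕ) : ℂ)) • h) with hQdef
  have hg : g = 1 - Q := by
    apply Subtype.ext
    funext x
    have hQx : Q x = ∏ k ∈ Finset.range m, (1 - (((k + 1 : ℕ) : ℂ)) * h x) := by
      show (evalHom X x) (∏ k ∈ Finset.range m, ((1 : Linf X) - (((k + 1 : ℕ) : ℂ)) • h)) = _
      rw [map_prod (evalHom X x)]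
      exact Finset.prod_congr rfl fun k _ => sub_smul_apply X h _ x
    have hsub : ((1 : Linf X) - Q) x = 1 - Q x := by
      have h1 := congrFun (lp.coeFn_sub (1 : Linf X) Q) x
      simp only [Pi.sub_apply] at h1
      rw [h1]; rfl
    rcases hval x with ⟨hg0, hh0⟩ | ⟨hg1, k, hk1, hkm, hhk⟩
    · show g x = _
      rw [hg0, hsub, hQx]
      rw [Finset.prod_congr rfl (fun j _ => by rw [hh0, mul_zero, sub_zero])]
      simp
    · show g x = _
      rw [hg1, hsub, hQx]
      rw [Finset.prod_eq_zero (Finset.mem_range.mpr (show k - 1 < m by omega))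
        (by
          rw [hhk]
          have hk : ((k - 1 + 1 : ℕ) : ℂ) = (k : ℂ) := by
            congr 1; omega
          rw [hk, mul_inv_cancel₀ (by exact_mod_cast (by omega : k ≠ 0)), sub_self])]
      simp
  rw [hg]
  exact B.sub_mem hone (hQmem m)

/-- if `B` is a C*-subalgebra of `l∞(X)` (a norm-closed star-subalgebra)
that contains `C(X)` and is closed under `α` and `L`, then `D_X ⊆ B`. -/
theorem Dalg_minimal (X : Set (ℕ → 𝔞)) (hXclosed : IsClosed X)
    (hXinv : ∀ x ∈ X, shift x ∈ X)
    (B : NonUnitalStarSubalgebra ℂ (Linf X)) (hBclosed : IsClosed (B : Set (Linf X)))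
    (hBcont : ∀ f : Linf X, (Continuous fun x : X => f x) → f ∈ B)
    (hBalpha : ∀ f ∈ B, alphaMap X hXinv f ∈ B)
    (hBL : ∀ f ∈ B, Lmap X f ∈ B) :
    Dalg X ≤ B := by
  have hone : (1 : Linf X) ∈ B := hBcont 1 continuous_const
  -- Step 1: the indicator of `E_u = {y | u y ∈ X}` lies in `B`, by induction on `u`.
  have hE : ∀ u : List 𝔞, chi X {y | wcat u y ∈ X} ∈ B := by
    intro u
    induction u using List.reverseRecOn with
    | nil =>
      have h1 : chi X {y | wcat ([] : List 𝔞) y ∈ X} = 1 := by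
        apply Subtype.ext
        funext x
        show {y | wcat ([] : List 𝔞) y ∈ X}.indicator (fun _ => (1 : ℂ)) (x : ℕ → 𝔞) = 1
        refine Set.indicator_of_mem ?_ _
        show wcat ([] : List 𝔞) (x : ℕ → 𝔞) ∈ X
        rw [wcat_nil']
        exact x.2
      rw [h1]
      exact hone
    | append_singleton u a ih =>
      have hza : chi X {y | y 0 = a} ∈ B :=
        hBcont _ (chi_continuous X _ 1 (fun x y hxy => by
          simp only [Set.mem_setOf_eq, hxy 0 one_pos]))
      set p : Linf X := chi X {y | y 0 = a} * chi X {y | wcat u y ∈ X} with hp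
      have hpB : p ∈ B := B.mul_mem hza ih
      have hLB : Lmap X p ∈ B := hBL _ hpB
      have hpapp : ∀ y : X, p y = chi X {y | y 0 = a} y * chi X {y | wcat u y ∈ X} y :=
        fun y => rfl
      refine indicator_mem_of_scaled X B hone (Fintype.card 𝔞) (Lmap X p) _ hLB ?_
      intro x
      have hLx : (Lmap X p) x = if (x : ℕ → 𝔞) ∈ shift '' X then
          (((preims X (x : ℕ → 𝔞)).ncard : ℂ))⁻¹ * ∑ᶠ y ∈ preims X (x : ℕ → 𝔞), p y
        else 0 := rfl
      have hgx : chi X {y | wcat (u ++ [a]) y ∈ X} x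
          = if wcat (u ++ [a]) (x : ℕ → 𝔞) ∈ X then 1 else 0 := by
        rw [chi_apply]
        by_cases hm : wcat (u ++ [a]) (x : ℕ → 𝔞) ∈ X
        · rw [if_pos hm]
          exact Set.indicator_of_mem
            (show (x : ℕ → 𝔞) ∈ {y | wcat (u ++ [a]) y ∈ X} from hm) _
        · rw [if_neg hm]
          exact Set.indicator_of_notMem
            (show (x : ℕ → 𝔞) ∉ {y | wcat (u ++ [a]) y ∈ X} from hm) _
      have hsh1 : shift (wcat [a] (x : ℕ → 𝔞)) = (x : ℕ → 𝔞) := by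
        have h := shift_iter_wcat [a] (x : ℕ → 𝔞)
        simpa using h
      by_cases him : (x : ℕ → 𝔞) ∈ shift '' X
      · -- x is in the image of the shift
        have hsum : ∑ᶠ y ∈ preims X (x : ℕ → 𝔞), p y
            = if wcat (u ++ [a]) (x : ℕ → 𝔞) ∈ X then 1 else 0 := by
          rw [finsum_mem_eq_finite_toFinset_sum _ (preims_finite X _)]
          by_cases hm : wcat (u ++ [a]) (x : ℕ → 𝔞) ∈ X
          · rw [if_pos hm]
            have haX : wcat [a] (x : ℕ → 𝔞) ∈ X :=
              mem_of_wcat_mem X hXinv u _ (by rwa [← wcat_append'])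
            have hy0mem : (⟨wcat [a] (x : ℕ → 𝔞), haX⟩ : X)
                ∈ (preims_finite X (x : ℕ → 𝔞)).toFinset := by
              rw [Set.Finite.mem_toFinset]
              exact hsh1
            rw [Finset.sum_eq_single_of_mem _ hy0mem ?_]
            · rw [hpapp, chi_apply, chi_apply]
              rw [Set.indicator_of_mem (show (wcat [a] (x : ℕ → 𝔞)) ∈ {y | y 0 = a} by
                    simp [Set.mem_setOf_eq, wcat]),
                Set.indicator_of_mem (show (wcat [a] (x : ℕ → 𝔞)) ∈ {y | wcat u y ∈ X} by
                    show wcat u (wcat [a] (x : ℕ → 𝔞)) ∈ X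
                    rwa [← wcat_append'])]
              norm_num
            · intro y hy hyne
              rw [Set.Finite.mem_toFinset] at hy
              have hy' : shift (y : ℕ → 𝔞) = (x : ℕ → 𝔞) := hy
              rw [hpapp, chi_apply]
              have hne : (y : ℕ → 𝔞) ∉ {y | y 0 = a} := by
                intro hy0
                have hy0' : (y : ℕ → 𝔞) 0 = a := hy0
                apply hyne
                apply Subtype.ext
                calc (y : ℕ → 𝔞) = wcat [(y : ℕ → 𝔞) 0] (shift (y : ℕ → 𝔞)) :=
                      (wcat_head _).symm
                  _ = wcat [a] (x : ℕ → 𝔞) := by rw [hy0', hy']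
              rw [Set.indicator_of_notMem hne, zero_mul]
          · rw [if_neg hm]
            apply Finset.sum_eq_zero
            intro y hy
            rw [Set.Finite.mem_toFinset] at hy
            have hy' : shift (y : ℕ → 𝔞) = (x : ℕ → 𝔞) := hy
            rw [hpapp, chi_apply, chi_apply]
            by_cases hy0 : (y : ℕ → 𝔞) 0 = a
            · have hyeq : (y : ℕ → 𝔞) = wcat [a] (x : ℕ → 𝔞) := by
                calc (y : ℕ → 𝔞) = wcat [(y : ℕ → 𝔞) 0] (shift (y : ℕ → 𝔞)) :=
                      (wcat_head _).symm
                  _ = wcat [a] (x : ℕ → 𝔞) := by rw [hy0, hy']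
              rw [Set.indicator_of_notMem (show (y : ℕ → 𝔞) ∉ {y | wcat u y ∈ X} by
                    show ¬ wcat u (y : ℕ → 𝔞) ∈ X
                    rw [hyeq, ← wcat_append']
                    exact hm), mul_zero]
            · rw [Set.indicator_of_notMem
                (show (y : ℕ → 𝔞) ∉ {y | y 0 = a} from hy0), zero_mul]
        have hN1 : 1 ≤ (preims X (x : ℕ → 𝔞)).ncard := by
          obtain ⟨y, hyX, hyx⟩ := him
          have hmem : (⟨y, hyX⟩ : X) ∈ preims X (x : ℕ → 𝔞) := hyx
          have := (Set.ncard_pos (preims_finite X _)).mpr ⟨_, hmem⟩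
          omega
        have hNm : (preims X (x : ℕ → 𝔞)).ncard ≤ Fintype.card 𝔞 := by
          have hinj : Set.InjOn (fun y : X => (y : ℕ → 𝔞) 0) (preims X (x : ℕ → 𝔞)) := by
            intro y hy z hz h0
            have hy' : shift (y : ℕ → 𝔞) = (x : ℕ → 𝔞) := hy
            have hz' : shift (z : ℕ → 𝔞) = (x : ℕ → 𝔞) := hz
            have h0' : (y : ℕ → 𝔞) 0 = (z : ℕ → 𝔞) 0 := h0
            apply Subtype.ext
            calc (y : ℕ → 𝔞) = wcat [(y : ℕ → 𝔞) 0] (shift (y : ℕ → 𝔞)) :=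
                  (wcat_head _).symm
              _ = wcat [(z : ℕ → 𝔞) 0] (shift (z : ℕ → 𝔞)) := by rw [h0', hy', hz']
              _ = z := wcat_head _
          calc (preims X (x : ℕ → 𝔞)).ncard
              = ((fun y : X => (y : ℕ → 𝔞) 0) '' preims X (x : ℕ → 𝔞)).ncard :=
                (Set.ncard_image_of_injOn hinj).symm
            _ ≤ (Set.univ : Set 𝔞).ncard :=
                Set.ncard_le_ncard (Set.subset_univ _) Set.finite_univ
            _ = Fintype.card 𝔞 := by rw [Set.ncard_univ, Nat.card_eq_fintype_card]
        by_cases hm : wcat (u ++ [a]) (x : ℕ → 𝔞) ∈ X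
        · right
          refine ⟨by rw [hgx, if_pos hm], (preims X (x : ℕ → 𝔞)).ncard, hN1, hNm, ?_⟩
          rw [hLx, if_pos him, hsum, if_pos hm, mul_one]
        · left
          refine ⟨by rw [hgx, if_neg hm], ?_⟩
          rw [hLx, if_pos him, hsum, if_neg hm, mul_zero]
      · -- x is not in the image of the shift
        left
        constructor
        · rw [hgx, if_neg]
          intro hm
          exact him ⟨wcat [a] (x : ℕ → 𝔞),
            mem_of_wcat_mem X hXinv u _ (by rwa [← wcat_append']), hsh1⟩
        · rw [hLx, if_neg him]
  -- Step 2: every generator `χ_{C(u,v)}` lies in `B`.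
  have hgen : ∀ u v : List 𝔞, chi X (cyl X u v) ∈ B := by
    intro u v
    set Zv : Set (ℕ → 𝔞) := {y | ∀ i (hi : i < v.length), y i = v.get ⟨i, hi⟩} with hZv
    have hZvB : chi X Zv ∈ B := by
      refine hBcont _ (chi_continuous X Zv v.length (fun x y hxy => ?_))
      simp only [hZv, Set.mem_setOf_eq]
      constructor
      · intro h i hi; rw [← hxy i hi]; exact h i hi
      · intro h i hi; rw [hxy i hi]; exact h i hi
    have hiterB : (alphaMap X hXinv)^[v.length] (chi X {y | wcat u y ∈ X}) ∈ B := by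
      have hstep : ∀ (k : ℕ) (f : Linf X), f ∈ B → (alphaMap X hXinv)^[k] f ∈ B := by
        intro k
        induction k with
        | zero => exact fun f hf => hf
        | succ k ih =>
          intro f hf
          rw [Function.iterate_succ_apply]
          exact ih _ (hBalpha f hf)
      exact hstep _ _ (hE u)
    have hprod : chi X (cyl X u v)
        = chi X Zv * (alphaMap X hXinv)^[v.length] (chi X {y | wcat u y ∈ X}) := by
      apply Subtype.ext
      funext x
      show (cyl X u v).indicator (fun _ => (1 : ℂ)) (x : ℕ → 𝔞)
        = chi X Zv x * ((alphaMap X hXinv)^[v.length] (chi X {y | wcat u y ∈ X})) x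
      rw [alphaMap_iter_apply, chi_apply, chi_apply]
      by_cases hc : (x : ℕ → 𝔞) ∈ cyl X u v
      · obtain ⟨z, hzX, huz, hvz, hxv⟩ := hc
        have hZmem : (x : ℕ → 𝔞) ∈ Zv := by
          intro i hi
          rw [hxv]
          simp only [wcat]
          rw [dif_pos hi]
        have hsh : shift^[v.length] (x : ℕ → 𝔞) = z := by
          rw [hxv]; exact shift_iter_wcat v z
        rw [Set.indicator_of_mem (show (x : ℕ → 𝔞) ∈ cyl X u v from ⟨z, hzX, huz, hvz, hxv⟩),
          Set.indicator_of_mem hZmem,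
          Set.indicator_of_mem (show shift^[v.length] (x : ℕ → 𝔞) ∈ {y | wcat u y ∈ X} by
            show wcat u (shift^[v.length] (x : ℕ → 𝔞)) ∈ X
            rw [hsh]; exact huz)]
        norm_num
      · rw [Set.indicator_of_notMem hc]
        by_cases hZmem : (x : ℕ → 𝔞) ∈ Zv
        · rw [Set.indicator_of_mem hZmem, one_mul]
          have hne : shift^[v.length] (x : ℕ → 𝔞) ∉ {y | wcat u y ∈ X} := by
            intro hu
            apply hc
            exact ⟨shift^[v.length] (x : ℕ → 𝔞), shiftMemIter X hXinv _ _ x.2, hu,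
              by rw [wcat_of_prefix v _ hZmem]; exact x.2,
              (wcat_of_prefix v _ hZmem).symm⟩
          rw [Set.indicator_of_notMem hne]
        · rw [Set.indicator_of_notMem hZmem, zero_mul]
    rw [hprod]
    exact B.mul_mem hZvB hiterB
  refine NonUnitalStarSubalgebra.topologicalClosure_minimal _
    (NonUnitalStarAlgebra.adjoin_le ?_) hBclosed
  rintro f ⟨u, v, rfl⟩
  exact hgen u v


end
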